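/- Let n ≥ 2 and let S be a submonoid of the monoid T_n of all maps from an n-element set to itself (under composition) such that the group of units G of S (the permutations contained in S) acts doubly (2-)transitively on the n-element set, and such that S contains at least one non-bijective (singular) map. Let k be a field whose characteristic does not divide |G|. Then the effective dimension of S over k equals n; moreover, the natural n-dimensional representation of S (the linearization of the action of S on the n-element set) embeds as a submodule into every effective k[S]-module. -/

import Mathlib

universe v

private lemma aux_pow_bij {n : ℕ} (g : Function.End (Fin n)) (hb : Function.Bijective g) :
    ∀ m : ℕ, Function.Bijective (g ^ m) := by
  intro m
  induction m with
  | zero => exact Function.bijective_id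
  | succ m ih => rw [pow_succ]; exact Function.Bijective.comp ih hb

private lemma aux_inv {n : ℕ} (S : Submonoid (Function.End (Fin n)))
    (g : Function.End (Fin n)) (hg : g ∈ S) (hb : Function.Bijective g) :
    ∃ h, h ∈ S ∧ Function.Bijective h ∧ g * h = 1 ∧ h * g = 1 := by
  have hfin : Finite (Function.End (Fin n)) := inferInstanceAs (Finite (Fin n → Fin n))
  obtain ⟨p, q, hpq, he⟩ := Finite.exists_ne_map_eq_of_infinite (fun m : ℕ => g ^ m)
  wlog hlt : p < q generalizing p q
  · exact this q p hpq.symm he.symm (by omega)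
  have hd : g ^ (q - p) = 1 := by
    have h1 : g ^ q = g ^ p * g ^ (q - p) := by rw [← pow_add]; congr 1; omega
    have h2 : g ^ p * (1 : Function.End (Fin n)) = g ^ p * g ^ (q - p) := by
      rw [mul_one, ← h1, he]
    have hinj : Function.Injective (g ^ p) := (aux_pow_bij g hb p).1
    funext x
    exact hinj (congrFun h2 x).symm
  have h1 : 1 ≤ q - p := by omega
  refine ⟨g ^ (q - p - 1), pow_mem hg _, aux_pow_bij g hb _, ?_, ?_⟩
  · rw [show g * g ^ (q - p - 1) = g ^ (q - p) by rw [← pow_succ']; congr 1; omega, hd]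
  · rw [show g ^ (q - p - 1) * g = g ^ (q - p) by rw [← pow_succ]; congr 1; omega, hd]

private def konst {n : ℕ} (i : Fin n) : Function.End (Fin n) := fun _ => i


private lemma aux_nonsurj_card {n : ℕ} (f : Function.End (Fin n)) (hf : ¬ Function.Bijective f) :
    (Finset.univ.image f).card < n := by
  have hns : ¬ Function.Surjective f := by
    intro hs
    exact hf ((Finite.surjective_iff_bijective).1 hs)
  rcases lt_or_eq_of_le ((Finset.card_le_univ _).trans_eq (Finset.card_fin n)) with h | h
  · exact h
  · exfalso
    apply hns
    intro z
    have huniv : Finset.univ.image f = Finset.univ := Finset.eq_univ_of_card _ (by simpa using h)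
    have hz : z ∈ Finset.univ.image f := by rw [huniv]; exact Finset.mem_univ z
    obtain ⟨t, _, ht⟩ := Finset.mem_image.1 hz
    exact ⟨t, ht⟩

private lemma aux_const {n : ℕ} (hn : 2 ≤ n) (S : Submonoid (Function.End (Fin n)))
    (hdt : ∀ a b c d : Fin n, a ≠ b → c ≠ d →
      ∃ g ∈ S, Function.Bijective g ∧ g a = c ∧ g b = d)
    (hsing : ∃ f ∈ S, ¬ Function.Bijective f) :
    ∀ i : Fin n, konst i ∈ S := by
  haveI : Nontrivial (Fin n) := Fin.nontrivial_iff_two_le.mpr hn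
  have key : ∀ m : ℕ, ∀ f : Function.End (Fin n), f ∈ S → ¬ Function.Bijective f →
      (Finset.univ.image f).card ≤ m → ∃ c : Fin n, konst c ∈ S := by
    intro m
    induction m with
    | zero =>
      intro f _ _ hc
      exfalso
      have hne : (Finset.univ.image f).Nonempty := Finset.univ_nonempty.image f
      have := Finset.Nonempty.card_pos hne
      omega
    | succ m ih =>
      intro f hfS hfb hc
      by_cases hm : (Finset.univ.image f).card ≤ m
      · exact ih f hfS hfb hm
      · by_cases h1 : (Finset.univ.image f).card ≤ 1
        · have hne : (Finset.univ.image f).Nonempty := Finset.univ_nonempty.image f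
          obtain ⟨i0⟩ := (inferInstance : Nonempty (Fin n))
          refine ⟨f i0, ?_⟩
          have heq : konst (f i0) = f := by
            funext x
            exact (Finset.card_le_one.1 h1 _ (Finset.mem_image_of_mem f (Finset.mem_univ x))
              _ (Finset.mem_image_of_mem f (Finset.mem_univ i0))).symm
          rwa [heq]
        · push_neg at h1 hm
          obtain ⟨x, hx, y, hy, hxy⟩ := Finset.one_lt_card.1 h1
          have hni : ¬ Function.Injective f := fun hi => hfb ((Finite.injective_iff_bijective).1 hi)
          obtain ⟨a, b, hab, hab'⟩ := Function.not_injective_iff.1 hni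
          obtain ⟨g, hgS, hgb, hgx, hgy⟩ := hdt x y a b hxy hab'
          set f' : Function.End (Fin n) := f * g * f with hf'
          have him : Finset.univ.image f' ⊆ (Finset.univ.image f).image (fun z => f (g z)) := by
            intro z hz
            obtain ⟨t, _, ht⟩ := Finset.mem_image.1 hz
            exact Finset.mem_image.2 ⟨f t, Finset.mem_image_of_mem f (Finset.mem_univ t), ht⟩
          have hsub : (Finset.univ.image f).image (fun z => f (g z)) ⊆
              ((Finset.univ.image f).erase y).image (fun z => f (g z)) := by
            intro z hz
            obtain ⟨t, htm, ht⟩ := Finset.mem_image.1 hz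
            by_cases hty : t = y
            · refine Finset.mem_image.2 ⟨x, Finset.mem_erase.2 ⟨hxy, hx⟩, ?_⟩
              rw [← ht, hty, hgx, hgy, hab]
            · exact Finset.mem_image.2 ⟨t, Finset.mem_erase.2 ⟨hty, htm⟩, ht⟩
          have hcard' : (Finset.univ.image f').card ≤ m := by
            calc (Finset.univ.image f').card
                ≤ (((Finset.univ.image f).erase y).image (fun z => f (g z))).card :=
                  Finset.card_le_card (him.trans hsub)
              _ ≤ ((Finset.univ.image f).erase y).card := Finset.card_image_le
              _ = (Finset.univ.image f).card - 1 := Finset.card_erase_of_mem hy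
              _ ≤ m := by omega
          have hlt : (Finset.univ.image f).card < n := aux_nonsurj_card f hfb
          have hf'b : ¬ Function.Bijective f' := by
            intro hb
            have huniv : (Finset.univ.image f') = Finset.univ := by
              apply Finset.eq_univ_of_forall
              intro z
              obtain ⟨t, ht⟩ := hb.2 z
              exact ht ▸ Finset.mem_image_of_mem f' (Finset.mem_univ t)
            have hcf := congrArg Finset.card huniv
            simp only [Finset.card_univ, Fintype.card_fin] at hcf
            omega
          exact ih f' (mul_mem (mul_mem hfS hgS) hfS) hf'b hcard'
  obtain ⟨f, hfS, hfb⟩ := hsing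
  obtain ⟨c, hc⟩ := key n f hfS hfb ((Finset.card_le_univ _).trans_eq (Finset.card_fin n))
  intro i
  by_cases hic : i = c
  · rwa [hic]
  · obtain ⟨d, hd⟩ := exists_ne c
    obtain ⟨j, hj⟩ := exists_ne i
    obtain ⟨g, hgS, _, hgc, _⟩ := hdt c d i j (Ne.symm hd) (Ne.symm hj)
    have heq : konst i = g * konst c := by
      funext t
      show i = g c
      rw [hgc]
    rw [heq]
    exact mul_mem hgS hc


universe u w

private lemma effdim_core {n : ℕ} (hn : 2 ≤ n) (S : Submonoid (Function.End (Fin n)))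
    (hdt : ∀ a b c d : Fin n, a ≠ b → c ≠ d →
      ∃ g ∈ S, Function.Bijective g ∧ g a = c ∧ g b = d)
    (hconst : ∀ i : Fin n, konst i ∈ S)
    (k : Type u) [Field k]
    (hchar : ¬ (ringChar k ∣
      Nat.card {g : S // Function.Bijective (g.val : Fin n → Fin n)}))
    (V : Type w) [AddCommGroup V] [Module k V]
    (ρ : S → Module.End k V) (hmul : ∀ s t : S, ρ (s * t) = ρ s * ρ t)
    (hinj : Function.Injective ρ) :
    ∃ ψ : (Fin n → k) →ₗ[k] V, Function.Injective ψ ∧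
      ∀ (f : S) (i : Fin n),
        ρ f (ψ (Pi.single i 1)) = ψ (Pi.single ((f : Function.End (Fin n)) i) 1) := by
  classical
  haveI : Nontrivial (Fin n) := Fin.nontrivial_iff_two_le.mpr hn
  haveI : Finite (Function.End (Fin n)) := inferInstanceAs (Finite (Fin n → Fin n))
  haveI : Fintype S := Fintype.ofFinite _
  -- constants in S
  set cS : Fin n → S := fun i => ⟨konst i, hconst i⟩ with hcS
  have hc_mul : ∀ (s : S) (i : Fin n), s * cS i = cS ((s : Function.End (Fin n)) i) := by
    intro s i
    apply Subtype.ext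
    rfl
  -- inverse lemma, lifted to S
  have hinv : ∀ g : S, Function.Bijective (g : Function.End (Fin n)) →
      ∃ h : S, Function.Bijective (h : Function.End (Fin n)) ∧ g * h = 1 ∧ h * g = 1 := by
    intro g hg
    obtain ⟨h, hhS, hhb, h1, h2⟩ := aux_inv S g.val g.2 hg
    exact ⟨⟨h, hhS⟩, hhb, Subtype.ext h1, Subtype.ext h2⟩
  -- the finsets
  set A : Fin n → Fin n → Fin n → Fin n → Finset S := fun i y a x =>
    Finset.univ.filter (fun g : S => Function.Bijective (g : Function.End (Fin n)) ∧
      (g : Function.End (Fin n)) i = a ∧ (g : Function.End (Fin n)) y = x) with hA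
  set B : Fin n → Fin n → Finset S := fun i a =>
    Finset.univ.filter (fun g : S => Function.Bijective (g : Function.End (Fin n)) ∧
      (g : Function.End (Fin n)) i = a) with hB
  -- translation invariance of |A|
  have hAcard : ∀ i y a x i' y' a' x', i ≠ y → a ≠ x → i' ≠ y' → a' ≠ x' →
      (A i y a x).card = (A i' y' a' x').card := by
    intro i y a x i' y' a' x' hiy hax hiy' hax'
    obtain ⟨h1, h1S, h1b, h1a, h1x⟩ := hdt a x a' x' hax hax'
    obtain ⟨h2, h2S, h2b, h2i, h2y⟩ := hdt i' y' i y hiy' hiy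
    set H1 : S := ⟨h1, h1S⟩
    set H2 : S := ⟨h2, h2S⟩
    obtain ⟨H1v, h1vb, h1e, h1e'⟩ := hinv H1 h1b
    obtain ⟨H2v, h2vb, h2e, h2e'⟩ := hinv H2 h2b
    have h1va : (H1v : Function.End (Fin n)) a' = a := by
      rw [← h1a]; exact congrFun (congrArg Subtype.val h1e') a
    have h1vx : (H1v : Function.End (Fin n)) x' = x := by
      rw [← h1x]; exact congrFun (congrArg Subtype.val h1e') x
    have h2vi : (H2v : Function.End (Fin n)) i = i' := by
      rw [← h2i]; exact congrFun (congrArg Subtype.val h2e') i'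
    have h2vy : (H2v : Function.End (Fin n)) y = y' := by
      rw [← h2y]; exact congrFun (congrArg Subtype.val h2e') y'
    have hmemA : ∀ g : S, g ∈ A i y a x ↔
        (Function.Bijective (g : Function.End (Fin n)) ∧
          (g : Function.End (Fin n)) i = a ∧ (g : Function.End (Fin n)) y = x) := by
      intro g; simp [hA]
    apply Finset.card_bij' (fun g _ => H1 * g * H2) (fun g _ => H1v * g * H2v)
    · intro g hg
      simp only [hA, Finset.mem_filter, Finset.mem_univ, true_and] at hg ⊢
      obtain ⟨hb, hgi, hgy⟩ := hg
      refine ⟨(h1b.comp hb).comp h2b, ?_, ?_⟩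
      · show h1 ((g : Function.End (Fin n)) (h2 i')) = a'
        rw [h2i, hgi, h1a]
      · show h1 ((g : Function.End (Fin n)) (h2 y')) = x'
        rw [h2y, hgy, h1x]
    · intro g hg
      simp only [hA, Finset.mem_filter, Finset.mem_univ, true_and] at hg ⊢
      obtain ⟨hb, hgi, hgy⟩ := hg
      refine ⟨(h1vb.comp hb).comp h2vb, ?_, ?_⟩
      · show (H1v : Function.End (Fin n)) ((g : Function.End (Fin n)) ((H2v : Function.End (Fin n)) i)) = a
        rw [h2vi, hgi, h1va]
      · show (H1v : Function.End (Fin n)) ((g : Function.End (Fin n)) ((H2v : Function.End (Fin n)) y)) = x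
        rw [h2vy, hgy, h1vx]
    · intro g _
      calc H1v * (H1 * g * H2) * H2v = (H1v * H1) * g * (H2 * H2v) := by
            simp only [mul_assoc]
        _ = g := by rw [h1e', h2e, one_mul, mul_one]
    · intro g _
      calc H1 * (H1v * g * H2v) * H2 = (H1 * H1v) * g * (H2v * H2) := by
            simp only [mul_assoc]
        _ = g := by rw [h1e, h2e', one_mul, mul_one]
  -- distinguished pair
  obtain ⟨i0, y0, hi0y0⟩ := exists_pair_ne (Fin n)
  set m : ℕ := (A i0 y0 i0 y0).card with hm
  -- cardinality of the unit group
  set Gb : Finset S := Finset.univ.filter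
    (fun g : S => Function.Bijective (g : Function.End (Fin n))) with hGbdef
  have hGb : Gb.card = (n * n - n) * m := by
    rw [Finset.card_eq_sum_card_fiberwise
      (f := fun g : S => ((g : Function.End (Fin n)) i0, (g : Function.End (Fin n)) y0))
      (t := Finset.univ.offDiag) (fun g hg => by
        simp only [hGbdef, Finset.mem_coe, Finset.mem_filter] at hg
        exact Finset.mem_offDiag.2 ⟨Finset.mem_univ _, Finset.mem_univ _,
          fun he => hi0y0 (hg.2.1 he)⟩)]
    have hfib : ∀ p ∈ Finset.univ.offDiag (α := Fin n),
        (Gb.filter (fun g : S =>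
          ((g : Function.End (Fin n)) i0, (g : Function.End (Fin n)) y0) = p)).card = m := by
      intro p hp
      have hp' : p.1 ≠ p.2 := (Finset.mem_offDiag.1 hp).2.2
      have : Gb.filter (fun g : S =>
          ((g : Function.End (Fin n)) i0, (g : Function.End (Fin n)) y0) = p) = A i0 y0 p.1 p.2 := by
        rw [hGbdef, Finset.filter_filter]
        apply Finset.filter_congr
        intro g _
        simp [Prod.ext_iff, and_assoc]
      rw [this]
      exact hAcard _ _ _ _ _ _ _ _ hi0y0 hp' hi0y0 hi0y0
    rw [Finset.sum_congr rfl hfib, Finset.sum_const, Finset.offDiag_card, smul_eq_mul]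
    simp [Finset.card_univ]
  have hNG : Nat.card {g : S // Function.Bijective (g.val : Fin n → Fin n)} = (n * n - n) * m := by
    rw [Nat.card_eq_fintype_card, Fintype.card_subtype, ← hGb]
  -- nonvanishing of m and n in k
  haveI : CharP k (ringChar k) := ringChar.charP k
  have hdvd : ¬ ringChar k ∣ (n * n - n) * m := by rw [← hNG]; exact hchar
  have hmk : (m : k) ≠ 0 := by
    intro h0
    exact hdvd (Dvd.dvd.mul_left ((CharP.cast_eq_zero_iff k (ringChar k) m).1 h0) _)
  have hnk : ((n : ℕ) : k) ≠ 0 := by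
    intro h0
    apply hdvd
    rw [← Nat.mul_sub_one, mul_assoc]
    exact Dvd.dvd.mul_right ((CharP.cast_eq_zero_iff k (ringChar k) n).1 h0) _
  -- cardinality of B
  have hBcard : ∀ i a, (B i a).card = (n - 1) * m := by
    intro i a
    obtain ⟨y, hy⟩ := exists_ne i
    rw [Finset.card_eq_sum_card_fiberwise
      (f := fun g : S => (g : Function.End (Fin n)) y)
      (t := Finset.univ.erase a) (fun g hg => by
        simp only [hB, Finset.mem_coe, Finset.mem_filter] at hg
        refine Finset.mem_erase.2 ⟨fun he => hy (hg.2.1.1 ?_), Finset.mem_univ _⟩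
        rw [show (g : Function.End (Fin n)) y = a from he, hg.2.2])]
    have hfib : ∀ x ∈ Finset.univ.erase a,
        ((B i a).filter (fun g : S => (g : Function.End (Fin n)) y = x)).card = m := by
      intro x hx
      have hxa : x ≠ a := (Finset.mem_erase.1 hx).1
      have : (B i a).filter (fun g : S => (g : Function.End (Fin n)) y = x) = A i y a x := by
        rw [hB, Finset.filter_filter]
        apply Finset.filter_congr
        intro g _
        simp [and_assoc]
      rw [this]
      exact hAcard _ _ _ _ _ _ _ _ (Ne.symm hy) (Ne.symm hxa) hi0y0 hi0y0
    rw [Finset.sum_congr rfl hfib, Finset.sum_const, smul_eq_mul]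
    congr 1
    rw [Finset.card_erase_of_mem (Finset.mem_univ a)]
    simp [Finset.card_univ]
  have hBmem : ∀ (i a : Fin n) (g : S), g ∈ B i a ↔
      (Function.Bijective (g : Function.End (Fin n)) ∧ (g : Function.End (Fin n)) i = a) := by
    intro i a g; simp [hB]
  -- distinguished vector
  have hcne : cS i0 ≠ cS y0 := by
    intro h
    exact hi0y0 (congrFun (congrArg Subtype.val h) i0)
  obtain ⟨u, hu⟩ : ∃ u : V, ρ (cS i0) u ≠ ρ (cS y0) u := by
    by_contra h
    push_neg at h
    exact hcne (hinj (LinearMap.ext h))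
  set P : Fin n → V := fun x => ρ (cS x) u with hPdef
  have hP : ∀ (s : S) (x : Fin n), ρ s (P x) = P ((s : Function.End (Fin n)) x) := by
    intro s x
    show ρ s (ρ (cS x) u) = ρ (cS ((s : Function.End (Fin n)) x)) u
    rw [← hc_mul, hmul]
    rfl
  set T : V := ∑ x : Fin n, P x with hTdef
  -- the key identity
  have key : ∀ l : Fin n → k, (∑ x : Fin n, l x • P x) = 0 → (∑ x : Fin n, l x) = 0 →
      ∀ (i a : Fin n), (l i * (m : k)) • (((n : ℕ) : k) • P a - T) = 0 := by
    intro l hl0 hsum i a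
    have step1 : ∀ g : S, (ρ g) (∑ x : Fin n, l x • P x)
        = ∑ x : Fin n, l x • P ((g : Function.End (Fin n)) x) := by
      intro g
      rw [map_sum]
      exact Finset.sum_congr rfl fun x _ => by rw [map_smul, hP]
    have step0 : ∑ x : Fin n, l x • (∑ g ∈ B i a, P ((g : Function.End (Fin n)) x)) = 0 := by
      calc ∑ x : Fin n, l x • (∑ g ∈ B i a, P ((g : Function.End (Fin n)) x))
          = ∑ x : Fin n, ∑ g ∈ B i a, l x • P ((g : Function.End (Fin n)) x) :=
            Finset.sum_congr rfl fun x _ => Finset.smul_sum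
        _ = ∑ g ∈ B i a, ∑ x : Fin n, l x • P ((g : Function.End (Fin n)) x) :=
            Finset.sum_comm
        _ = ∑ g ∈ B i a, (ρ g) (∑ x : Fin n, l x • P x) :=
            Finset.sum_congr rfl fun g _ => (step1 g).symm
        _ = 0 := by rw [hl0]; simp
    have Qi : ∑ g ∈ B i a, P ((g : Function.End (Fin n)) i) = ((n - 1) * m) • P a := by
      rw [Finset.sum_congr rfl fun g hg => by rw [((hBmem i a g).1 hg).2],
        Finset.sum_const, hBcard i a]
    have Qx : ∀ x : Fin n, x ≠ i →
        ∑ g ∈ B i a, P ((g : Function.End (Fin n)) x)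
          = m • (∑ t ∈ Finset.univ.erase a, P t) := by
      intro x hx
      have hmapsto : ∀ g ∈ B i a, (g : Function.End (Fin n)) x ∈ Finset.univ.erase a := by
        intro g hg
        obtain ⟨hb, hgi⟩ := (hBmem i a g).1 hg
        exact Finset.mem_erase.2 ⟨fun he => hx (hb.1 (by rw [he, hgi])), Finset.mem_univ _⟩
      rw [← Finset.sum_fiberwise_of_maps_to hmapsto
        (fun g : S => P ((g : Function.End (Fin n)) x))]
      have hinner : ∀ t ∈ Finset.univ.erase a,
          ∑ g ∈ (B i a).filter (fun g : S => (g : Function.End (Fin n)) x = t),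
            P ((g : Function.End (Fin n)) x) = m • P t := by
        intro t ht
        have hta : t ≠ a := (Finset.mem_erase.1 ht).1
        have hfe : (B i a).filter (fun g : S => (g : Function.End (Fin n)) x = t)
            = A i x a t := by
          rw [hB, hA]
          dsimp only
          rw [Finset.filter_filter]
          apply Finset.filter_congr
          intro g _
          simp [and_assoc]
        rw [Finset.sum_congr rfl (fun g hg => by
            rw [(Finset.mem_filter.1 hg).2]), Finset.sum_const, hfe]
        congr 1
        exact hAcard _ _ _ _ _ _ _ _ (Ne.symm hx) (Ne.symm hta) hi0y0 hi0y0
      rw [Finset.sum_congr rfl hinner, ← Finset.smul_sum]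
    -- split the sum at x = i
    rw [← Finset.add_sum_erase _ _ (Finset.mem_univ i), Qi,
      Finset.sum_congr rfl (fun x hx => by rw [Qx x (Finset.mem_erase.1 hx).1]),
      ← Finset.sum_smul] at step0
    have hsum' : ∑ x ∈ Finset.univ.erase i, l x = - l i := by
      have h := Finset.add_sum_erase Finset.univ l (Finset.mem_univ i)
      rw [hsum] at h
      exact eq_neg_of_add_eq_zero_right h
    rw [hsum'] at step0
    have hT' : ∑ t ∈ Finset.univ.erase a, P t = T - P a := by
      have h := Finset.add_sum_erase Finset.univ P (Finset.mem_univ a)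
      rw [hTdef, ← h]
      abel
    rw [hT'] at step0
    rw [← Nat.cast_smul_eq_nsmul k ((n - 1) * m), ← Nat.cast_smul_eq_nsmul k m] at step0
    have hcast : (((n - 1) * m : ℕ) : k) = (((n : ℕ) : k) - 1) * (m : k) := by
      push_cast [Nat.cast_sub (show 1 ≤ n by omega)]
      ring
    rw [hcast] at step0
    calc (l i * (m : k)) • (((n : ℕ) : k) • P a - T)
        = l i • ((((n : ℕ) : k) - 1) * (m : k)) • P a + (- l i) • ((m : k) • (T - P a)) := by
          module
      _ = 0 := step0
  -- consequence: no nonconstant relation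
  have hPeq : ∀ (l : Fin n → k) (i j : Fin n), (∑ x : Fin n, l x • P x) = 0 →
      (∑ x : Fin n, l x) = 0 → l i ≠ l j → False := by
    intro l i j hl0 hsum hij
    have hD : ∀ a : Fin n, ((n : ℕ) : k) • P a = T := by
      intro a
      have h3 : ((l i - l j) * (m : k)) • (((n : ℕ) : k) • P a - T) = 0 := by
        rw [sub_mul, sub_smul, key l hl0 hsum i a, key l hl0 hsum j a, sub_zero]
      rcases smul_eq_zero.1 h3 with h | h
      · exact absurd h (mul_ne_zero (sub_ne_zero.2 hij) hmk)
      · exact sub_eq_zero.1 h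
    apply hu
    show P i0 = P y0
    apply smul_right_injective V hnk
    show ((n : ℕ) : k) • P i0 = ((n : ℕ) : k) • P y0
    rw [hD i0, hD y0]
  -- the embedding
  set ψ : (Fin n → k) →ₗ[k] V :=
    { toFun := fun l => ∑ x : Fin n, l x • P x
      map_add' := fun l1 l2 => by simp [add_smul, Finset.sum_add_distrib]
      map_smul' := fun c l => by simp [Finset.smul_sum, mul_smul] } with hψdef
  have hψ : ∀ l : Fin n → k, ψ l = ∑ x : Fin n, l x • P x := fun l => rfl
  have hψsingle : ∀ i : Fin n, ψ (Pi.single i 1) = P i := by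
    intro i
    rw [hψ, Finset.sum_eq_single i]
    · simp
    · intro b _ hb
      simp [Pi.single_eq_of_ne hb]
    · intro h
      exact absurd (Finset.mem_univ i) h
  have hker : ∀ l : Fin n → k, ψ l = 0 → l = 0 := by
    intro l hl
    rw [hψ] at hl
    by_cases hs : (∑ x : Fin n, l x) = 0
    · by_cases hcst : ∀ i j : Fin n, l i = l j
      · funext x
        have hx : (∑ t : Fin n, l t) = (n : ℕ) • l x := by
          rw [Finset.sum_congr rfl fun t _ => hcst t x, Finset.sum_const]
          simp [Finset.card_univ]
        rw [hx, ← Nat.cast_smul_eq_nsmul k, smul_eq_mul] at hs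
        simpa using (mul_eq_zero.1 hs).resolve_left hnk
      · push_neg at hcst
        obtain ⟨i, j, hij⟩ := hcst
        exact (hPeq l i j hl hs hij).elim
    · exfalso
      apply hu
      show P i0 = P y0
      have hz : ∀ t : Fin n, (∑ x : Fin n, l x) • P t = 0 := by
        intro t
        have h0 : ρ (cS t) (∑ x : Fin n, l x • P x) = 0 := by rw [hl]; simp
        rw [map_sum] at h0
        rw [Finset.sum_congr rfl (fun x _ =>
          show ρ (cS t) (l x • P x) = l x • P t by rw [map_smul, hP]; rfl),
          ← Finset.sum_smul] at h0
        exact h0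
      have hz1 := (smul_eq_zero.1 (hz i0)).resolve_left hs
      have hz2 := (smul_eq_zero.1 (hz y0)).resolve_left hs
      rw [hz1, hz2]
  refine ⟨ψ, ?_, ?_⟩
  · intro l1 l2 h
    have h0 := hker (l1 - l2) (by rw [map_sub, h, sub_self])
    exact sub_eq_zero.1 h0
  · intro f i
    rw [hψsingle, hP, hψsingle]

/-- Let `S` be a submonoid of the full transformation monoid `T_n` (`n ≥ 2`)
whose group of units (the bijections lying in `S`) is doubly transitive, and
which contains at least one singular (non-bijective) map.  If the
characteristic of `k` does not divide the order of the group of units, then the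
effective dimension of `S` over `k` is `n`, and moreover the natural
`n`-dimensional representation of `S` embeds as a submodule into every
effective `k[S]`-module. -/
theorem effDim_doubly_transitive_with_singular
    (n : ℕ) (hn : 2 ≤ n) (S : Submonoid (Function.End (Fin n)))
    (hdt : ∀ a b c d : Fin n, a ≠ b → c ≠ d →
      ∃ g ∈ S, Function.Bijective g ∧ g a = c ∧ g b = d)
    (hsing : ∃ f ∈ S, ¬ Function.Bijective f)
    (k : Type*) [Field k]
    (hchar : ¬ (ringChar k ∣
      Nat.card {g : S // Function.Bijective (g.val : Fin n → Fin n)})) :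
    IsLeast {m : ℕ | ∃ φ : S → Matrix (Fin m) (Fin m) k,
        Function.Injective φ ∧ ∀ s t : S, φ (s * t) = φ s * φ t} n
    ∧ ∀ (V : Type v) [AddCommGroup V] [Module k V]
        (ρ : S →* Module.End k V), Function.Injective ρ →
        ∃ ψ : (Fin n → k) →ₗ[k] V, Function.Injective ψ ∧
          ∀ (f : S) (i : Fin n),
            ρ f (ψ (Pi.single i 1)) = ψ (Pi.single ((f : Function.End (Fin n)) i) 1) := by
  classical
  have hconst : ∀ i : Fin n, konst i ∈ S := aux_const hn S hdt hsing
  refine ⟨⟨?_, ?_⟩, ?_⟩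
  · -- membership: the natural representation
    refine ⟨fun s => Matrix.of (fun i j =>
      if (s : Function.End (Fin n)) j = i then (1 : k) else 0), ?_, ?_⟩
    · intro s t h
      apply Subtype.ext
      funext j
      by_contra hne
      have h' := congrFun (congrFun (congrArg (Matrix.of.symm) h)
        ((s : Function.End (Fin n)) j)) j
      simp only [Matrix.of_apply, Equiv.symm_apply_apply] at h'
      rw [if_neg (show ¬((t : Function.End (Fin n)) j = (s : Function.End (Fin n)) j)
        from fun he => hne he.symm)] at h'
      simp at h'
    · intro s t
      ext i j
      rw [Matrix.mul_apply, Finset.sum_eq_single ((t : Function.End (Fin n)) j)]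
      · show (if (s : Function.End (Fin n)) ((t : Function.End (Fin n)) j) = i
          then (1 : k) else 0) = _
        simp
      · intro b _ hb
        simp only [Matrix.of_apply]
        rw [if_neg (show ¬((t : Function.End (Fin n)) j = b) from fun he => hb he.symm),
          mul_zero]
      · intro h
        exact absurd (Finset.mem_univ _) h
  · -- lower bound
    intro m hm
    obtain ⟨φ, hφinj, hφmul⟩ := hm
    have hmul' : ∀ s t : S, Matrix.mulVecLin (φ (s * t))
        = Matrix.mulVecLin (φ s) * Matrix.mulVecLin (φ t) := by
      intro s t
      rw [hφmul, Matrix.mulVecLin_mul]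
      rfl
    have hinj' : Function.Injective (fun s : S => Matrix.mulVecLin (φ s)) := by
      intro s t h
      apply hφinj
      ext i j
      have h1 : (φ s).mulVec (Pi.single j 1) = (φ t).mulVec (Pi.single j 1) := by
        rw [← Matrix.mulVecLin_apply, show Matrix.mulVecLin (φ s) = Matrix.mulVecLin (φ t) from h,
          Matrix.mulVecLin_apply]
      simpa [Matrix.mulVec_single] using congrFun h1 i
    obtain ⟨ψ, hψinj, -⟩ := effdim_core hn S hdt hconst k hchar (Fin m → k)
      (fun s => Matrix.mulVecLin (φ s)) hmul' hinj'
    calc n = Module.finrank k (Fin n → k) := by simp [Module.finrank_pi]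
      _ ≤ Module.finrank k (Fin m → k) := LinearMap.finrank_le_finrank_of_injective hψinj
      _ = m := by simp [Module.finrank_pi]
  · -- the natural module embeds in every effective module
    intro V _ _ ρ hρinj
    exact effdim_core hn S hdt hconst k hchar V (fun s => ρ s)
      (fun s t => map_mul ρ s t) hρinj
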